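/- Suppose 0 < μ ≤ m/ℓ and ν + μ ≥ m/ℓ. Then for every a ∈ F, r ≥ 0, and t ∈ ℝ, one has g(a, r, t) ≥ g(a, 0, r + t). -/
import Mathlib


open Finset

theorem stmt7
    {F : Type*} [NormedAddCommGroup F] [InnerProductSpace ℝ F]
    (l m : ℕ) (hm : 1 ≤ m) (hml : m ≤ l)
    (x : Fin l → F) (ν μ b : ℝ) (hν : 0 < ν) (hb : 1 ≤ b)
    (hμpos : 0 < μ) (hμle : μ ≤ (m : ℝ) / (l : ℝ))
    (hνμ : (m : ℝ) / (l : ℝ) ≤ ν + μ)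
    (g : F → ℝ → ℝ → ℝ)
    (hg : ∀ a r t, g a r t =
      (1/2) * (ν * r - μ * t)
      + (1/(2*(l:ℝ))) * ∑ i ∈ univ.filter (fun i : Fin l => (i : ℕ) < m),
          max (‖x i - a‖^2 - r) 0
      + (b/(2*(l:ℝ))) * ∑ i ∈ univ.filter (fun i : Fin l => m ≤ (i : ℕ)),
          max (r + t - ‖x i - a‖^2) 0) :
    ∀ (a : F) (r t : ℝ), 0 ≤ r → g a 0 (r + t) ≤ g a r t := by
  intro a r t hr
  have hl0 : 0 < l := lt_of_lt_of_le hm hml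
  have hl : (0:ℝ) < l := by exact_mod_cast hl0
  rw [hg, hg]
  simp only [sub_zero, zero_add]
  have hcard : (univ.filter (fun i : Fin l => (i : ℕ) < m)).card = m := by
    have : (univ.filter (fun i : Fin l => (i : ℕ) < m)) =
        (Finset.range m).attachFin (fun i hi => lt_of_lt_of_le (Finset.mem_range.mp hi) hml) := by
      ext i
      simp [Finset.mem_attachFin]
    rw [this, Finset.card_attachFin, Finset.card_range]
  set A := ∑ i ∈ univ.filter (fun i : Fin l => (i : ℕ) < m), max (‖x i - a‖^2 - r) 0 with hA
  set A0 := ∑ i ∈ univ.filter (fun i : Fin l => (i : ℕ) < m), max (‖x i - a‖^2) 0 with hA0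
  have hsum : A0 ≤ A + (m : ℝ) * r := by
    have h1 : A0 ≤ ∑ i ∈ univ.filter (fun i : Fin l => (i : ℕ) < m),
        (max (‖x i - a‖^2 - r) 0 + r) := by
      apply Finset.sum_le_sum
      intro i _
      refine max_le ?_ ?_
      · linarith [le_max_left (‖x i - a‖^2 - r) 0]
      · linarith [le_max_right (‖x i - a‖^2 - r) 0]
    have h2 : ∑ i ∈ univ.filter (fun i : Fin l => (i : ℕ) < m),
        (max (‖x i - a‖^2 - r) 0 + r) = A + (m : ℝ) * r := by
      rw [Finset.sum_add_distrib, Finset.sum_const, hcard, nsmul_eq_mul]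
    linarith
  have hmr : (m : ℝ) * r ≤ (ν + μ) * l * r := by
    have hm' : (m : ℝ) ≤ (ν + μ) * l := by
      rw [div_le_iff₀ hl] at hνμ
      linarith
    exact mul_le_mul_of_nonneg_right hm' hr
  have hinv : (0:ℝ) < 1 / (2 * l) := by positivity
  have key : (1/(2*(l:ℝ))) * A0 ≤ (1/(2*(l:ℝ))) * A + (1/2) * (ν + μ) * r := by
    have h3 : (1/(2*(l:ℝ))) * A0 ≤ (1/(2*(l:ℝ))) * (A + (m : ℝ) * r) :=
      mul_le_mul_of_nonneg_left hsum (le_of_lt hinv)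
    have h4 : (1/(2*(l:ℝ))) * ((m : ℝ) * r) ≤ (1/2) * (ν + μ) * r := by
      rw [div_mul_eq_mul_div, one_mul, div_le_iff₀ (by positivity : (0:ℝ) < 2 * l)]
      nlinarith
    nlinarith
  nlinarith
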